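/- arXiv:1805.12454 — 2 statements merged into one kernel-verified Lean document; each statement's English description precedes it below -/
import Mathlib

section
/- Let X1, X2 be spectral spaces. If Ψ : 𝒳(X1) → 𝒳(X2) is a homeomorphism, then there exists a unique homeomorphism ψ : X1 → X2 such that Ψ = 𝒳(ψ), where 𝒳(ψ)(C) := ψ(C)^gen for C ∈ 𝒳(X1); in particular, Ψ ∘ φ1 = φ2 ∘ ψ for the canonical embeddings φ1, φ2. -/
open Set TopologicalSpace Topology

/-- A subset of a topological space is *inverse-closed* if it is an intersection of a
family of quasi-compact open subsets. -/
def InvClosed {X : Type*} [TopologicalSpace X] (Y : Set X) : Prop :=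
  ∃ 𝒪 : Set (Set X), (∀ U ∈ 𝒪, IsOpen U ∧ IsCompact U) ∧ Y = ⋂₀ 𝒪

/-- A subset is *saturated* if it is an intersection of open sets. -/
def IsSatd {X : Type*} [TopologicalSpace X] (Y : Set X) : Prop :=
  ∃ 𝒪 : Set (Set X), (∀ U ∈ 𝒪, IsOpen U) ∧ Y = ⋂₀ 𝒪

/-- A topological space is *spectral* if it is T0, quasi-compact, sober, and the
quasi-compact open subsets form a basis closed under finite intersections. -/
def IsSpectralSpace (X : Type*) [TopologicalSpace X] : Prop :=
  T0Space X ∧ CompactSpace X ∧ QuasiSober X ∧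
    IsTopologicalBasis {U : Set X | IsOpen U ∧ IsCompact U} ∧
    ∀ U V : Set X, IsOpen U → IsCompact U → IsOpen V → IsCompact V → IsCompact (U ∩ V)

/-- `𝒳(X)`: the nonempty inverse-closed subsets of `X`. -/
abbrev XCal (X : Type*) [TopologicalSpace X] : Type _ :=
  {Y : Set X // Y.Nonempty ∧ InvClosed Y}

/-- The Zariski topology on `𝒳(X)`, with basic open sets `𝒰(Ω) = {Y : Y ⊆ Ω}` for `Ω`
quasi-compact open in `X`. -/
instance XCal.instTop (X : Type*) [TopologicalSpace X] : TopologicalSpace (XCal X) :=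
  generateFrom {S : Set (XCal X) | ∃ Ω : Set X, IsOpen Ω ∧ IsCompact Ω ∧
    S = {Y : XCal X | (Y : Set X) ⊆ Ω}}

/-- The specialization-type order: `x ≤ y` iff `y ∈ closure {x}`. -/
def spord {X : Type*} [TopologicalSpace X] (x y : X) : Prop := y ∈ closure {x}

/-- Closure under generizations of a set `S`: all points `z ≤ s` for some `s ∈ S`. -/
def genOf {X : Type*} [TopologicalSpace X] (S : Set X) : Set X :=
  {z : X | ∃ s ∈ S, spord z s}

/-- A map is *spectral* if preimages of quasi-compact open sets are quasi-compact open. -/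
def SpecMap {X Y : Type*} [TopologicalSpace X] [TopologicalSpace Y] (f : X → Y) : Prop :=
  ∀ Ω : Set Y, IsOpen Ω → IsCompact Ω → IsOpen (f ⁻¹' Ω) ∧ IsCompact (f ⁻¹' Ω)

/-- The constructible topology on a spectral space: generated by the quasi-compact open
sets together with their complements. -/
def constructibleTop (X : Type*) [TopologicalSpace X] : TopologicalSpace X :=
  generateFrom ({U : Set X | IsOpen U ∧ IsCompact U} ∪
    {S : Set X | ∃ U : Set X, IsOpen U ∧ IsCompact U ∧ S = Uᶜ})

/-- `s` is the supremum of `S` for the order induced by the topology. -/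
def IsSupOf {X : Type*} [TopologicalSpace X] (S : Set X) (s : X) : Prop :=
  (∀ c ∈ S, spord c s) ∧ ∀ t : X, (∀ c ∈ S, spord c t) → spord s t

/-- A map is sup-preserving if it sends existing finite suprema to suprema. -/
def SupPreserving {X Y : Type*} [TopologicalSpace X] [TopologicalSpace Y] (f : X → Y) : Prop :=
  ∀ F : Set X, F.Finite → ∀ s : X, IsSupOf F s → IsSupOf (f '' F) (f s)

/-- A map is open onto its image. -/
def OpenOntoImage {X Y : Type*} [TopologicalSpace X] [TopologicalSpace Y] (f : X → Y) : Prop :=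
  ∀ V : Set X, IsOpen V → ∃ W : Set Y, IsOpen W ∧ f '' V = W ∩ Set.range f

namespace Stmt15Aux

variable {X : Type*} [TopologicalSpace X]

lemma mem_genOf_singleton {x z : X} : z ∈ genOf ({x} : Set X) ↔ spord z x := by
  simp [genOf]

lemma spord_refl' (x : X) : spord x x := subset_closure rfl

lemma mem_of_spord_of_isOpen {U : Set X} (hU : IsOpen U) {c z : X} (hc : c ∈ U) (h : spord z c) :
    z ∈ U := by
  obtain ⟨w, hwU, hw⟩ := mem_closure_iff.1 h U hU hc
  rw [mem_singleton_iff] at hw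
  exact hw ▸ hwU

lemma invClosed_sInter_eq {C : Set X} (h : InvClosed C) :
    C = ⋂₀ {U : Set X | IsOpen U ∧ IsCompact U ∧ C ⊆ U} := by
  obtain ⟨𝒪, h𝒪, rfl⟩ := h
  apply Set.Subset.antisymm
  · exact fun x hx U hU => hU.2.2 hx
  · exact fun x hx U hU => hx U ⟨(h𝒪 U hU).1, (h𝒪 U hU).2, sInter_subset_of_mem hU⟩

lemma invClosed_exists_sep {C : Set X} (h : InvClosed C) {x : X} (hx : x ∉ C) :
    ∃ U : Set X, IsOpen U ∧ IsCompact U ∧ C ⊆ U ∧ x ∉ U := by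
  by_contra hcon
  push_neg at hcon
  exact hx (invClosed_sInter_eq h ▸ fun U hU => hcon U hU.1 hU.2.1 hU.2.2)

lemma invClosed_gen_closed {C : Set X} (h : InvClosed C) {c z : X} (hc : c ∈ C)
    (hz : spord z c) : z ∈ C := by
  rw [invClosed_sInter_eq h] at hc ⊢
  exact fun U hU => mem_of_spord_of_isOpen hU.1 (hc U hU) hz

lemma genOf_singleton_eq (hb : IsTopologicalBasis {U : Set X | IsOpen U ∧ IsCompact U}) (x : X) :
    genOf ({x} : Set X) = ⋂₀ {U : Set X | (IsOpen U ∧ IsCompact U) ∧ x ∈ U} := by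
  ext z
  rw [mem_genOf_singleton]
  constructor
  · intro h U hU
    exact mem_of_spord_of_isOpen hU.1.1 hU.2 h
  · intro h
    show x ∈ closure {z}
    rw [mem_closure_iff]
    intro o ho hxo
    obtain ⟨U, hU, hxU, hUo⟩ := hb.isOpen_iff.1 ho x hxo
    exact ⟨z, hUo (h U ⟨hU, hxU⟩), rfl⟩

def phiM (hb : IsTopologicalBasis {U : Set X | IsOpen U ∧ IsCompact U}) (x : X) : XCal X :=
  ⟨genOf {x}, ⟨x, x, rfl, spord_refl' x⟩,
    ⟨{U : Set X | (IsOpen U ∧ IsCompact U) ∧ x ∈ U}, fun U hU => hU.1,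
      genOf_singleton_eq hb x⟩⟩

lemma phiM_coe (hb : IsTopologicalBasis {U : Set X | IsOpen U ∧ IsCompact U}) (x : X) :
    (phiM hb x : Set X) = genOf {x} := rfl

lemma genOf_singleton_subset_iff {Ω : Set X} (hΩ : IsOpen Ω) {x : X} :
    genOf ({x} : Set X) ⊆ Ω ↔ x ∈ Ω :=
  ⟨fun h => h ⟨x, rfl, spord_refl' x⟩,
   fun h _ hz => mem_of_spord_of_isOpen hΩ h (mem_genOf_singleton.1 hz)⟩

lemma isOpen_U {Ω : Set X} (h1 : IsOpen Ω) (h2 : IsCompact Ω) :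
    IsOpen {Y : XCal X | (Y : Set X) ⊆ Ω} :=
  isOpen_generateFrom_of_mem ⟨Ω, h1, h2, rfl⟩

lemma xcal_isOpen_mono {Y Z : XCal X} (h : (Y : Set X) ⊆ Z) {o : Set (XCal X)}
    (ho : IsOpen o) (hZ : Z ∈ o) : Y ∈ o := by
  have ho' : GenerateOpen {S : Set (XCal X) | ∃ Ω : Set X, IsOpen Ω ∧ IsCompact Ω ∧
      S = {Y : XCal X | (Y : Set X) ⊆ Ω}} o := ho
  clear ho
  induction ho' with
  | basic s hs =>
    obtain ⟨Ω, _, _, rfl⟩ := hs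
    exact h.trans hZ
  | univ => trivial
  | inter s t _ _ ihs iht => exact ⟨ihs hZ.1, iht hZ.2⟩
  | sUnion S _ ih =>
    obtain ⟨s, hsS, hZs⟩ := hZ
    exact ⟨s, hsS, ih s hsS hZs⟩

lemma spord_xcal_iff {Y Z : XCal X} : spord Y Z ↔ (Y : Set X) ⊆ (Z : Set X) := by
  constructor
  · intro h
    have hrepr := invClosed_sInter_eq Z.2.2
    intro z hz
    rw [hrepr]
    intro U hU
    have hS : IsOpen {W : XCal X | (W : Set X) ⊆ U} := isOpen_U hU.1 hU.2.1
    obtain ⟨W, hWS, hW⟩ := mem_closure_iff.1 h _ hS hU.2.2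
    rw [mem_singleton_iff] at hW
    exact (hW ▸ hWS) hz
  · intro h
    show Z ∈ closure {Y}
    rw [mem_closure_iff]
    intro o ho hZo
    exact ⟨Y, xcal_isOpen_mono h ho hZo, rfl⟩

lemma invClosed_union {C D : Set X} (hC : InvClosed C) (hD : InvClosed D) :
    InvClosed (C ∪ D) := by
  refine ⟨{W : Set X | ∃ U V : Set X, (IsOpen U ∧ IsCompact U ∧ C ⊆ U) ∧
    (IsOpen V ∧ IsCompact V ∧ D ⊆ V) ∧ W = U ∪ V}, ?_, ?_⟩
  · rintro W ⟨U, V, hU, hV, rfl⟩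
    exact ⟨hU.1.union hV.1, hU.2.1.union hV.2.1⟩
  · apply Set.Subset.antisymm
    · rintro x (hx | hx) W ⟨U, V, hU, hV, rfl⟩
      · exact Or.inl (hU.2.2 hx)
      · exact Or.inr (hV.2.2 hx)
    · intro x hx
      by_contra hxn
      have hxC : x ∉ C := fun h => hxn (Or.inl h)
      have hxD : x ∉ D := fun h => hxn (Or.inr h)
      obtain ⟨U, hUo, hUc, hCU, hxU⟩ := invClosed_exists_sep hC hxC
      obtain ⟨V, hVo, hVc, hDV, hxV⟩ := invClosed_exists_sep hD hxD
      rcases hx (U ∪ V) ⟨U, V, ⟨hUo, hUc, hCU⟩, ⟨hVo, hVc, hDV⟩, rfl⟩ with h | h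
      · exact hxU h
      · exact hxV h

lemma invClosed_of_qcOpen {U : Set X} (h1 : IsOpen U) (h2 : IsCompact U) : InvClosed U :=
  ⟨{U}, by simp [h1, h2], by simp⟩


lemma chain_finset_min {c : Set (Set X)} (hc : IsChain (· ⊆ ·) c) (u : Finset ↥c)
    (hu : u.Nonempty) : ∃ j ∈ u, ∀ i ∈ u, (j : Set X) ⊆ i := by
  classical
  induction u using Finset.induction_on with
  | empty => exact absurd hu (by simp)
  | @insert a u ha ih =>
    rcases u.eq_empty_or_nonempty with rfl | hu'
    · exact ⟨a, by simp, by simp⟩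
    · obtain ⟨j, hj, hjmin⟩ := ih hu'
      rcases hc.total a.2 j.2 with h | h
      · refine ⟨a, Finset.mem_insert_self _ _, ?_⟩
        intro i hi
        rcases Finset.mem_insert.1 hi with rfl | hi
        · exact subset_rfl
        · exact h.trans (hjmin i hi)
      · refine ⟨j, Finset.mem_insert_of_mem hj, ?_⟩
        intro i hi
        rcases Finset.mem_insert.1 hi with rfl | hi
        · exact h
        · exact hjmin i hi

lemma invClosed_isCompact (hX : IsSpectralSpace X) {C : Set X} (hC : InvClosed C) :
    IsCompact C := by
  obtain ⟨hT0, hCo, hSo, hBa, hInt⟩ := hX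
  haveI := hCo
  haveI := hSo
  set F := {U : Set X | IsOpen U ∧ IsCompact U ∧ C ⊆ U} with hFdef
  have hCF : C = ⋂₀ F := invClosed_sInter_eq hC
  apply isCompact_of_finite_subcover
  intro ι U hUo hsub
  set V := ⋃ i, U i with hVdef
  have hV : IsOpen V := isOpen_iUnion hUo
  by_cases hall : ∃ W ∈ F, W ⊆ V
  · obtain ⟨W, hWF, hWV⟩ := hall
    obtain ⟨t, ht⟩ := hWF.2.1.elim_finite_subcover U hUo hWV
    exact ⟨t, (hCF ▸ sInter_subset_of_mem hWF).trans ht⟩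
  · exfalso
    push_neg at hall
    set S := {A : Set X | IsClosed A ∧ A ⊆ Vᶜ ∧ ∀ W ∈ F, (W ∩ A).Nonempty} with hSdef
    have hVcS : Vᶜ ∈ S := by
      refine ⟨hV.isClosed_compl, subset_rfl, fun W hW => ?_⟩
      rw [inter_compl_nonempty_iff]
      exact hall W hW
    have hchain : ∀ c ⊆ S, IsChain (· ⊆ ·) c → c.Nonempty → ∃ lb ∈ S, ∀ s ∈ c, lb ⊆ s := by
      intro c hcS hchn hcne
      obtain ⟨A₀, hA₀⟩ := hcne
      refine ⟨⋂₀ c, ⟨isClosed_sInter fun A hA => (hcS hA).1,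
        (sInter_subset_of_mem hA₀).trans (hcS hA₀).2.1, ?_⟩, fun A hA => sInter_subset_of_mem hA⟩
      intro W hW
      have hWc : IsCompact W := hW.2.1
      have key : ∀ u : Finset ↥c, (W ∩ ⋂ i ∈ u, (i : Set X)).Nonempty := by
        intro u
        rcases u.eq_empty_or_nonempty with rfl | hu
        · simpa using ((hcS hA₀).2.2 W hW).mono inter_subset_left
        · obtain ⟨j, hj, hjmin⟩ := chain_finset_min hchn u hu
          obtain ⟨w, hwW, hwj⟩ := (hcS j.2).2.2 W hW
          exact ⟨w, hwW, mem_iInter₂.2 fun i hi => hjmin i hi hwj⟩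
      have := hWc.inter_iInter_nonempty (fun i : ↥c => (i : Set X))
        (fun i => (hcS i.2).1) key
      obtain ⟨w, hwW, hw⟩ := this
      refine ⟨w, hwW, ?_⟩
      rw [mem_sInter]
      intro A hA
      exact mem_iInter.1 hw ⟨A, hA⟩
    obtain ⟨A, hAVc, hAmin⟩ := zorn_superset_nonempty S hchain Vᶜ hVcS
    have hAS : A ∈ S := hAmin.1
    have hAne : A.Nonempty := by
      have huniv : (univ : Set X) ∈ F := ⟨isOpen_univ, isCompact_univ, subset_univ _⟩
      exact (hAS.2.2 univ huniv).mono inter_subset_right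
    have hirr : IsIrreducible A := by
      refine ⟨hAne, ?_⟩
      intro u v hu hv ⟨a, haA, hau⟩ ⟨b, hbA, hbv⟩
      by_contra hconn
      have hdisj : A ∩ (u ∩ v) = ∅ := not_nonempty_iff_eq_empty.1 hconn
      have hcover : A = (A \ u) ∪ (A \ v) := by
        apply Set.Subset.antisymm
        · intro x hx
          by_cases hxu : x ∈ u
          · by_cases hxv : x ∈ v
            · exact absurd (show x ∈ A ∩ (u ∩ v) from ⟨hx, hxu, hxv⟩) (by rw [hdisj]; simp)
            · exact Or.inr ⟨hx, hxv⟩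
          · exact Or.inl ⟨hx, hxu⟩
        · rintro x (hx | hx) <;> exact hx.1
      have hnotS : ∀ u' : Set X, IsOpen u' → ((A ∩ u').Nonempty) → ¬ (A \ u') ∈ S := by
        intro u' hu' ⟨a', ha'A, ha'u⟩ hmem
        have : A ⊆ A \ u' := hAmin.2 hmem diff_subset
        exact (this ha'A).2 ha'u
      have h1 : ¬ (A \ u) ∈ S := hnotS u hu ⟨a, haA, hau⟩
      have h2 : ¬ (A \ v) ∈ S := hnotS v hv ⟨b, hbA, hbv⟩
      rw [hSdef, mem_setOf_eq] at h1 h2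
      push_neg at h1 h2
      have hc1 : IsClosed (A \ u) := hAS.1.sdiff hu
      have hc2 : IsClosed (A \ v) := hAS.1.sdiff hv
      have hs1 : (A \ u) ⊆ Vᶜ := diff_subset.trans hAS.2.1
      have hs2 : (A \ v) ⊆ Vᶜ := diff_subset.trans hAS.2.1
      obtain ⟨W₁, hW₁F, hW₁⟩ := h1 hc1 hs1
      obtain ⟨W₂, hW₂F, hW₂⟩ := h2 hc2 hs2
      have hWF : W₁ ∩ W₂ ∈ F := ⟨hW₁F.1.inter hW₂F.1,
        hInt _ _ hW₁F.1 hW₁F.2.1 hW₂F.1 hW₂F.2.1, subset_inter hW₁F.2.2 hW₂F.2.2⟩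
      obtain ⟨y, hyW, hyA⟩ := hAS.2.2 _ hWF
      rw [hcover] at hyA
      rcases hyA with hy | hy
      · exact absurd (show y ∈ W₁ ∩ (A \ u) from ⟨hyW.1, hy⟩) (by rw [hW₁]; simp)
      · exact absurd (show y ∈ W₂ ∩ (A \ v) from ⟨hyW.2, hy⟩) (by rw [hW₂]; simp)
    obtain ⟨x, hx⟩ := QuasiSober.sober hirr hAS.1
    have hxC : x ∈ C := by
      rw [hCF]
      intro W hW
      obtain ⟨w, hwW, hwA⟩ := hAS.2.2 W hW
      have : w ∈ closure {x} := hx ▸ hwA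
      exact mem_of_spord_of_isOpen hW.1 hwW this
    have hxA : x ∈ A := hx ▸ subset_closure rfl
    exact hAS.2.1 hxA (hsub hxC)


lemma prime_finset {C : Set X} (hCne : C.Nonempty)
    (hp : ∀ D E : Set X, D.Nonempty → InvClosed D → E.Nonempty → InvClosed E →
      C ⊆ D ∪ E → C ⊆ D ∨ C ⊆ E)
    {ι : Type*} (t : Finset ι) (B : ι → Set X)
    (hB : ∀ i ∈ t, IsOpen (B i) ∧ IsCompact (B i))
    (hsub : C ⊆ ⋃ i ∈ t, B i) : ∃ i ∈ t, C ⊆ B i := by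
  classical
  induction t using Finset.induction_on with
  | empty =>
    obtain ⟨x, hx⟩ := hCne
    simpa using hsub hx
  | @insert a t hat ih =>
    have hBa := hB a (Finset.mem_insert_self a t)
    have hBt : ∀ i ∈ t, IsOpen (B i) ∧ IsCompact (B i) :=
      fun i hi => hB i (Finset.mem_insert_of_mem hi)
    set E := ⋃ i ∈ t, B i with hEdef
    have hEo : IsOpen E := isOpen_biUnion fun i hi => (hBt i hi).1
    have hEc : IsCompact E := t.isCompact_biUnion fun i hi => (hBt i hi).2
    have hsub' : C ⊆ B a ∪ E := by
      rw [hEdef, ← Finset.set_biUnion_insert]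
      exact hsub
    rcases (B a).eq_empty_or_nonempty with hBae | hBane
    · have : C ⊆ E := fun x hx => (hsub' hx).resolve_left (by rw [hBae]; simp)
      obtain ⟨i, hi, hCi⟩ := ih hBt this
      exact ⟨i, Finset.mem_insert_of_mem hi, hCi⟩
    rcases E.eq_empty_or_nonempty with hEe | hEne
    · have : C ⊆ B a := fun x hx => (hsub' hx).resolve_right (by rw [hEe]; simp)
      exact ⟨a, Finset.mem_insert_self a t, this⟩
    rcases hp (B a) E hBane (invClosed_of_qcOpen hBa.1 hBa.2) hEne
      (invClosed_of_qcOpen hEo hEc) hsub' with h | h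
    · exact ⟨a, Finset.mem_insert_self a t, h⟩
    · obtain ⟨i, hi, hCi⟩ := ih hBt h
      exact ⟨i, Finset.mem_insert_of_mem hi, hCi⟩

lemma exists_top_of_prime (hX : IsSpectralSpace X) {C : Set X} (hCne : C.Nonempty)
    (hC : InvClosed C)
    (hp : ∀ D E : Set X, D.Nonempty → InvClosed D → E.Nonempty → InvClosed E →
      C ⊆ D ∪ E → C ⊆ D ∨ C ⊆ E) :
    ∃ x ∈ C, C = genOf {x} := by
  have hCc : IsCompact C := invClosed_isCompact hX hC
  have hBa := hX.2.2.2.1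
  have hmax : ∃ x ∈ C, ∀ c ∈ C, spord c x := by
    by_contra hcon
    push_neg at hcon
    have hcov : ∀ x : ↥C, ∃ B : Set X, (IsOpen B ∧ IsCompact B) ∧ (x : X) ∈ B ∧
        ∃ c ∈ C, B ∩ closure {c} = ∅ := by
      rintro ⟨x, hx⟩
      obtain ⟨c, hc, hnsp⟩ := hcon x hx
      have hxo : x ∈ (closure {c})ᶜ := hnsp
      obtain ⟨B, hB, hxB, hBsub⟩ := hBa.isOpen_iff.1 isClosed_closure.isOpen_compl x hxo
      refine ⟨B, hB, hxB, c, hc, ?_⟩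
      exact eq_empty_of_subset_empty (fun y hy => absurd hy.2 (hBsub hy.1))
    choose B hBqc hxB hBc using hcov
    have hcover : C ⊆ ⋃ i : ↥C, B i := fun x hx => mem_iUnion.2 ⟨⟨x, hx⟩, hxB ⟨x, hx⟩⟩
    obtain ⟨t, ht⟩ := hCc.elim_finite_subcover B (fun i => (hBqc i).1) hcover
    obtain ⟨i, _, hCB⟩ := prime_finset hCne hp t B (fun i _ => hBqc i) ht
    obtain ⟨c, hc, hBce⟩ := hBc i
    have : c ∈ B i ∩ closure {c} := ⟨hCB hc, subset_closure rfl⟩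
    rw [hBce] at this
    exact this
  obtain ⟨x, hx, hxtop⟩ := hmax
  refine ⟨x, hx, Set.Subset.antisymm ?_ ?_⟩
  · intro c hc
    exact mem_genOf_singleton.2 (hxtop c hc)
  · intro z hz
    exact invClosed_gen_closed hC hx (mem_genOf_singleton.1 hz)


lemma genOf_singleton_inj (hT0 : T0Space X) {a b : X}
    (h : genOf ({a} : Set X) = genOf {b}) : a = b := by
  haveI := hT0
  have h1 : a ∈ genOf ({b} : Set X) := h ▸ mem_genOf_singleton.2 (spord_refl' a)
  have h2 : b ∈ genOf ({a} : Set X) := h ▸ mem_genOf_singleton.2 (spord_refl' b)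
  have s1 : a ⤳ b := specializes_iff_mem_closure.2 (mem_genOf_singleton.1 h1)
  have s2 : b ⤳ a := specializes_iff_mem_closure.2 (mem_genOf_singleton.1 h2)
  exact (s1.antisymm s2).eq

def joinX (Y Z : XCal X) : XCal X :=
  ⟨(Y : Set X) ∪ (Z : Set X), Y.2.1.inl, invClosed_union Y.2.2 Z.2.2⟩

lemma phiM_continuous (hb : IsTopologicalBasis {U : Set X | IsOpen U ∧ IsCompact U}) :
    Continuous (phiM hb) := by
  apply continuous_generateFrom_iff.2
  rintro s ⟨Ω, h1, h2, rfl⟩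
  have : (phiM hb) ⁻¹' {Y : XCal X | (Y : Set X) ⊆ Ω} = Ω := by
    ext x
    exact genOf_singleton_subset_iff h1
  rw [this]
  exact h1

lemma phiM_prime (hb : IsTopologicalBasis {U : Set X | IsOpen U ∧ IsCompact U}) (x : X) :
    ∀ D E : XCal X, (phiM hb x : Set X) ⊆ (D : Set X) ∪ (E : Set X) →
      (phiM hb x : Set X) ⊆ D ∨ (phiM hb x : Set X) ⊆ E := by
  intro D E h
  rcases h (show x ∈ genOf {x} from ⟨x, rfl, spord_refl' x⟩) with hD | hE
  · exact Or.inl fun z hz => invClosed_gen_closed D.2.2 hD (mem_genOf_singleton.1 hz)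
  · exact Or.inr fun z hz => invClosed_gen_closed E.2.2 hE (mem_genOf_singleton.1 hz)

variable {X₁ X₂ : Type*} [TopologicalSpace X₁] [TopologicalSpace X₂]

lemma homeo_subset_iff (e : XCal X₁ ≃ₜ XCal X₂) {Y Z : XCal X₁} :
    ((e Y : Set X₂) ⊆ (e Z : Set X₂)) ↔ ((Y : Set X₁) ⊆ (Z : Set X₁)) := by
  rw [← spord_xcal_iff, ← spord_xcal_iff]
  show e Z ∈ closure {e Y} ↔ Z ∈ closure {Y}
  rw [← Set.image_singleton, ← e.image_closure]
  exact e.injective.mem_set_image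

lemma homeo_prime (e : XCal X₁ ≃ₜ XCal X₂) {C : XCal X₁}
    (hp : ∀ D E : XCal X₁, (C : Set X₁) ⊆ (D : Set X₁) ∪ (E : Set X₁) →
      (C : Set X₁) ⊆ D ∨ (C : Set X₁) ⊆ E) :
    ∀ D E : XCal X₂, (e C : Set X₂) ⊆ (D : Set X₂) ∪ (E : Set X₂) →
      (e C : Set X₂) ⊆ D ∨ (e C : Set X₂) ⊆ E := by
  intro D E hsub
  set J : XCal X₂ := joinX D E with hJ
  set J' : XCal X₁ := joinX (e.symm D) (e.symm E) with hJ'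
  have hJsub : (J : Set X₂) ⊆ (e J' : Set X₂) := by
    have hD : (e (e.symm D) : Set X₂) ⊆ (e J' : Set X₂) :=
      (homeo_subset_iff e).2 subset_union_left
    have hE : (e (e.symm E) : Set X₂) ⊆ (e J' : Set X₂) :=
      (homeo_subset_iff e).2 subset_union_right
    rw [e.apply_symm_apply] at hD hE
    exact union_subset hD hE
  have h1 : (e C : Set X₂) ⊆ (e J' : Set X₂) := hsub.trans hJsub
  have h2 : (C : Set X₁) ⊆ (J' : Set X₁) := (homeo_subset_iff e).1 h1
  rcases hp (e.symm D) (e.symm E) h2 with h | h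
  · left
    have := (homeo_subset_iff e).2 h
    rwa [e.apply_symm_apply] at this
  · right
    have := (homeo_subset_iff e).2 h
    rwa [e.apply_symm_apply] at this

lemma exists_psi (hX₂ : IsSpectralSpace X₂)
    (hb₁ : IsTopologicalBasis {U : Set X₁ | IsOpen U ∧ IsCompact U})
    (e : XCal X₁ ≃ₜ XCal X₂) :
    ∀ x : X₁, ∃ y : X₂, e (phiM hb₁ x) = phiM hX₂.2.2.2.1 y := by
  intro x
  have hp2 := homeo_prime e (phiM_prime hb₁ x)
  have hp2' : ∀ D E : Set X₂, D.Nonempty → InvClosed D → E.Nonempty → InvClosed E →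
      (e (phiM hb₁ x) : Set X₂) ⊆ D ∪ E →
      (e (phiM hb₁ x) : Set X₂) ⊆ D ∨ (e (phiM hb₁ x) : Set X₂) ⊆ E := by
    intro D E hDn hDi hEn hEi hsub
    exact hp2 ⟨D, hDn, hDi⟩ ⟨E, hEn, hEi⟩ hsub
  obtain ⟨y, _, hy⟩ := exists_top_of_prime hX₂ (e (phiM hb₁ x)).2.1 (e (phiM hb₁ x)).2.2 hp2'
  exact ⟨y, Subtype.ext hy⟩

end Stmt15Aux

/-- Every homeomorphism `Ψ : 𝒳(X₁) → 𝒳(X₂)` is of the form `𝒳(ψ)`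
for a unique homeomorphism `ψ : X₁ → X₂`; in particular `Ψ ∘ φ₁ = φ₂ ∘ ψ`. -/
theorem stmt15 {X₁ X₂ : Type*} [TopologicalSpace X₁] [TopologicalSpace X₂]
    (hX₁ : IsSpectralSpace X₁) (hX₂ : IsSpectralSpace X₂)
    (Ψ : XCal X₁ → XCal X₂) (hΨ : IsHomeomorph Ψ) :
    ∃! ψ : X₁ → X₂, IsHomeomorph ψ ∧
      (∀ C : XCal X₁, (Ψ C : Set X₂) = genOf (ψ '' (C : Set X₁))) ∧
      (∀ (x : X₁) (C : XCal X₁),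
        (C : Set X₁) = genOf {x} → (Ψ C : Set X₂) = genOf {ψ x}) := by
  classical
  obtain ⟨e, he⟩ := isHomeomorph_iff_exists_homeomorph.1 hΨ
  subst he
  have hT1 := hX₁.1
  have hT2 := hX₂.1
  have hb₁ := hX₁.2.2.2.1
  have hb₂ := hX₂.2.2.2.1
  choose ψ hψ using Stmt15Aux.exists_psi hX₂ hb₁ e
  choose ψ' hψ' using Stmt15Aux.exists_psi hX₁ hb₂ e.symm
  have key : ∀ x, e (Stmt15Aux.phiM hb₁ x) = Stmt15Aux.phiM hb₂ (ψ x) := hψ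
  have key' : ∀ y, e.symm (Stmt15Aux.phiM hb₂ y) = Stmt15Aux.phiM hb₁ (ψ' y) := hψ'
  have hphi_inj₁ : ∀ {a b : X₁}, Stmt15Aux.phiM hb₁ a = Stmt15Aux.phiM hb₁ b → a = b :=
    fun h => Stmt15Aux.genOf_singleton_inj hT1 (congrArg Subtype.val h)
  have hphi_inj₂ : ∀ {a b : X₂}, Stmt15Aux.phiM hb₂ a = Stmt15Aux.phiM hb₂ b → a = b :=
    fun h => Stmt15Aux.genOf_singleton_inj hT2 (congrArg Subtype.val h)
  have hlinv : ∀ x, ψ' (ψ x) = x := by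
    intro x
    apply hphi_inj₁
    rw [← key' (ψ x), ← key x, e.symm_apply_apply]
  have hrinv : ∀ y, ψ (ψ' y) = y := by
    intro y
    apply hphi_inj₂
    rw [← key (ψ' y), ← key' y, e.apply_symm_apply]
  have hcont : Continuous ψ := by
    apply hb₂.continuous_iff.2
    intro Ω hΩ
    have hpre : ψ ⁻¹' Ω =
        (Stmt15Aux.phiM hb₁) ⁻¹' (⇑e ⁻¹' {W : XCal X₂ | (W : Set X₂) ⊆ Ω}) := by
      ext x
      simp only [Set.mem_preimage, Set.mem_setOf_eq]
      rw [key x]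
      exact (Stmt15Aux.genOf_singleton_subset_iff hΩ.1).symm
    rw [hpre]
    exact (Stmt15Aux.phiM_continuous hb₁).isOpen_preimage _
      (e.continuous.isOpen_preimage _ (Stmt15Aux.isOpen_U hΩ.1 hΩ.2))
  have hcont' : Continuous ψ' := by
    apply hb₁.continuous_iff.2
    intro Ω hΩ
    have hpre : ψ' ⁻¹' Ω =
        (Stmt15Aux.phiM hb₂) ⁻¹' (⇑e.symm ⁻¹' {W : XCal X₁ | (W : Set X₁) ⊆ Ω}) := by
      ext y
      simp only [Set.mem_preimage, Set.mem_setOf_eq]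
      rw [key' y]
      exact (Stmt15Aux.genOf_singleton_subset_iff hΩ.1).symm
    rw [hpre]
    exact (Stmt15Aux.phiM_continuous hb₂).isOpen_preimage _
      (e.symm.continuous.isOpen_preimage _ (Stmt15Aux.isOpen_U hΩ.1 hΩ.2))
  have hhom : IsHomeomorph ψ :=
    (Homeomorph.mk ⟨ψ, ψ', hlinv, hrinv⟩ hcont hcont').isHomeomorph
  have h2 : ∀ C : XCal X₁, (e C : Set X₂) = genOf (ψ '' (C : Set X₁)) := by
    intro C
    apply Set.Subset.antisymm
    · intro y hy
      have hsub1 : (Stmt15Aux.phiM hb₂ y : Set X₂) ⊆ (e C : Set X₂) := fun z hz =>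
        Stmt15Aux.invClosed_gen_closed (e C).2.2 hy (Stmt15Aux.mem_genOf_singleton.1 hz)
      have hsub2 : (e.symm (Stmt15Aux.phiM hb₂ y) : Set X₁) ⊆ (e.symm (e C) : Set X₁) :=
        (Stmt15Aux.homeo_subset_iff e.symm).2 hsub1
      rw [e.symm_apply_apply, key' y] at hsub2
      have hmem : ψ' y ∈ (C : Set X₁) := hsub2 ⟨ψ' y, rfl, Stmt15Aux.spord_refl' _⟩
      refine ⟨ψ (ψ' y), ⟨ψ' y, hmem, rfl⟩, ?_⟩
      rw [hrinv y]
      exact Stmt15Aux.spord_refl' y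
    · rintro z ⟨s, ⟨x, hxC, rfl⟩, hzs⟩
      have hsub1 : (Stmt15Aux.phiM hb₁ x : Set X₁) ⊆ (C : Set X₁) := fun w hw =>
        Stmt15Aux.invClosed_gen_closed C.2.2 hxC (Stmt15Aux.mem_genOf_singleton.1 hw)
      have hsub2 := (Stmt15Aux.homeo_subset_iff e).2 hsub1
      rw [key x] at hsub2
      exact hsub2 (Stmt15Aux.mem_genOf_singleton.2 hzs)
  have h3 : ∀ (x : X₁) (C : XCal X₁),
      (C : Set X₁) = genOf {x} → (e C : Set X₂) = genOf {ψ x} := by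
    intro x C hC
    have : C = Stmt15Aux.phiM hb₁ x := Subtype.ext hC
    rw [this, key x]
    rfl
  refine ⟨ψ, ⟨hhom, h2, h3⟩, ?_⟩
  rintro ψ₀ ⟨-, -, h3₀⟩
  funext x
  have e1 := h3₀ x (Stmt15Aux.phiM hb₁ x) rfl
  have e2 := h3 x (Stmt15Aux.phiM hb₁ x) rfl
  exact Stmt15Aux.genOf_singleton_inj hT2 (e1.symm.trans e2)
end

section
/- Two spectral spaces X1 and X2 are homeomorphic if and only if 𝒳(X1) and 𝒳(X2) are homeomorphic. -/
open Set TopologicalSpace Topology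

section Dev

variable {X : Type*} [TopologicalSpace X]

lemma spord_iff_specializes {x y : X} : spord x y ↔ x ⤳ y :=
  specializes_iff_mem_closure.symm

lemma mem_genOf_singleton {x z : X} : z ∈ genOf {x} ↔ x ∈ closure {z} := by
  simp [genOf, spord]

lemma self_mem_genOf (x : X) : x ∈ genOf {x} :=
  mem_genOf_singleton.mpr (subset_closure rfl)

lemma genOf_subset_open {x : X} {O : Set X} (hO : IsOpen O) (hx : x ∈ O) :
    genOf {x} ⊆ O := by
  intro z hz
  obtain ⟨w, hwO, hwz⟩ := mem_closure_iff.mp (mem_genOf_singleton.mp hz) O hO hx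
  rw [mem_singleton_iff] at hwz
  rwa [← hwz]

lemma genOf_subset_invClosed {x : X} {A : Set X} (hA : InvClosed A) (hx : x ∈ A) :
    genOf {x} ⊆ A := by
  obtain ⟨𝒪, h𝒪, rfl⟩ := hA
  exact subset_sInter fun O hO => genOf_subset_open (h𝒪 O hO).1 (hx O hO)

lemma genOf_singleton_eq (hb : IsTopologicalBasis {U : Set X | IsOpen U ∧ IsCompact U})
    (x : X) : genOf {x} = ⋂₀ {U : Set X | (IsOpen U ∧ IsCompact U) ∧ x ∈ U} := by
  apply subset_antisymm
  · exact subset_sInter fun U hU => genOf_subset_open hU.1.1 hU.2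
  · intro z hz
    rw [mem_genOf_singleton, mem_closure_iff]
    intro O hO hxO
    obtain ⟨U, hU, hxU, hUO⟩ := hb.exists_subset_of_mem_open hxO hO
    exact ⟨z, hUO (hz U ⟨hU, hxU⟩), rfl⟩

lemma genOf_invClosed (hb : IsTopologicalBasis {U : Set X | IsOpen U ∧ IsCompact U})
    (x : X) : (genOf {x} : Set X).Nonempty ∧ InvClosed (genOf {x}) :=
  ⟨⟨x, self_mem_genOf x⟩,
    ⟨{U : Set X | (IsOpen U ∧ IsCompact U) ∧ x ∈ U}, fun U hU => hU.1,
      genOf_singleton_eq hb x⟩⟩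

/-- The defining subbasis of the Zariski topology on `XCal X`. -/
def XSub (X : Type*) [TopologicalSpace X] : Set (Set (XCal X)) :=
  {S : Set (XCal X) | ∃ Ω : Set X, IsOpen Ω ∧ IsCompact Ω ∧
    S = {Y : XCal X | (Y : Set X) ⊆ Ω}}

lemma XCal.isOpen_iff {S : Set (XCal X)} :
    IsOpen S ↔ TopologicalSpace.GenerateOpen (XSub X) S := Iff.rfl

lemma XCal.isOpen_U {Ω : Set X} (hΩ : IsOpen Ω) (hc : IsCompact Ω) :
    IsOpen {Y : XCal X | (Y : Set X) ⊆ Ω} :=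
  XCal.isOpen_iff.mpr (TopologicalSpace.GenerateOpen.basic _ ⟨Ω, hΩ, hc, rfl⟩)

lemma XCal.lower_aux {S : Set (XCal X)}
    (hS : TopologicalSpace.GenerateOpen (XSub X) S) :
    ∀ Y Z : XCal X, Y ∈ S → (Z : Set X) ⊆ (Y : Set X) → Z ∈ S := by
  induction hS with
  | basic s hs =>
    rintro Y Z hY hZY
    obtain ⟨Ω, -, -, rfl⟩ := hs
    exact hZY.trans hY
  | univ => intros; trivial
  | inter s t _ _ ihs iht =>
    rintro Y Z ⟨h1, h2⟩ hZY
    exact ⟨ihs _ _ h1 hZY, iht _ _ h2 hZY⟩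
  | sUnion K _ ih =>
    rintro Y Z ⟨t, ht, hY⟩ hZY
    exact ⟨t, ht, ih t ht _ _ hY hZY⟩

lemma XCal.coe_eq_sInter (Y : XCal X) :
    (Y : Set X) = ⋂₀ {U : Set X | (IsOpen U ∧ IsCompact U) ∧ (Y : Set X) ⊆ U} := by
  obtain ⟨hne, 𝒪, h𝒪, h⟩ := Y.2
  apply subset_antisymm
  · exact subset_sInter fun U hU => hU.2
  · intro z hz
    rw [h]
    exact fun U hU => hz U ⟨h𝒪 U hU, by rw [h]; exact Set.sInter_subset_of_mem hU⟩

lemma XCal.spord_iff {Y₁ Y : XCal X} : spord Y₁ Y ↔ (Y₁ : Set X) ⊆ (Y : Set X) := by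
  constructor
  · intro h
    have key : ∀ U : Set X, (IsOpen U ∧ IsCompact U) → (Y : Set X) ⊆ U →
        (Y₁ : Set X) ⊆ U := by
      intro U hU hYU
      obtain ⟨W, hW1, hW2⟩ := mem_closure_iff.mp h _ (XCal.isOpen_U hU.1 hU.2) hYU
      rw [mem_singleton_iff] at hW2
      rw [← hW2]
      exact hW1
    calc (Y₁ : Set X) ⊆ ⋂₀ {U : Set X | (IsOpen U ∧ IsCompact U) ∧ (Y : Set X) ⊆ U} :=
          subset_sInter fun U hU => key U hU.1 hU.2
      _ = (Y : Set X) := (XCal.coe_eq_sInter Y).symm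
  · intro h
    exact mem_closure_iff.mpr fun o ho hY =>
      ⟨Y₁, XCal.lower_aux (XCal.isOpen_iff.mp ho) _ _ hY h, rfl⟩

lemma union_mem_XCal (Y₁ Y₂ : XCal X) :
    ((Y₁ : Set X) ∪ (Y₂ : Set X)).Nonempty ∧ InvClosed ((Y₁ : Set X) ∪ (Y₂ : Set X)) := by
  obtain ⟨hne1, 𝒪₁, h₁, e₁⟩ := Y₁.2
  obtain ⟨hne2, 𝒪₂, h₂, e₂⟩ := Y₂.2
  refine ⟨hne1.mono Set.subset_union_left, ?_⟩
  refine ⟨(fun p : Set X × Set X => p.1 ∪ p.2) '' (𝒪₁ ×ˢ 𝒪₂), ?_, ?_⟩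
  · rintro U ⟨⟨a, b⟩, ⟨ha, hb⟩, rfl⟩
    exact ⟨(h₁ a ha).1.union (h₂ b hb).1, (h₁ a ha).2.union (h₂ b hb).2⟩
  · rw [e₁, e₂, Set.sInter_union_sInter, Set.sInter_image]

lemma inter_invClosed {Y U : Set X} (hY : InvClosed Y) (hU : IsOpen U) (hc : IsCompact U)
    (hI : ∀ A B : Set X, IsOpen A → IsCompact A → IsOpen B → IsCompact B → IsCompact (A ∩ B)) :
    InvClosed (Y ∩ U) := by
  obtain ⟨𝒪, h𝒪, rfl⟩ := hY
  refine ⟨insert U ((fun W => W ∩ U) '' 𝒪), ?_, ?_⟩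
  · rintro V (rfl | ⟨W, hW, rfl⟩)
    · exact ⟨hU, hc⟩
    · exact ⟨(h𝒪 W hW).1.inter hU, hI W U (h𝒪 W hW).1 (h𝒪 W hW).2 hU hc⟩
  · rw [Set.sInter_insert, Set.sInter_image]
    ext z
    simp only [Set.mem_inter_iff, Set.mem_sInter, Set.mem_iInter]
    exact ⟨fun h => ⟨h.2, fun i hi => ⟨h.1 i hi, h.2⟩⟩,
      fun h => ⟨fun i hi => (h.2 i hi).1, h.1⟩⟩

/-- Sup-irreducibility, expressed purely in terms of `spord`. -/
def SupIrr {T : Type*} [TopologicalSpace T] (y : T) : Prop :=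
  ∀ a b : T, spord a y → spord b y →
    (∀ z : T, spord a z → spord b z → spord y z) → y = a ∨ y = b

end Dev

section Dev2

variable {X : Type*} [TopologicalSpace X]

lemma supIrr_iff_genOf (hX : IsSpectralSpace X) (Y : XCal X) :
    SupIrr Y ↔ ∃ x : X, (Y : Set X) = genOf {x} := by
  obtain ⟨hT0, hCpt, hSob, hBasis, hInter⟩ := hX
  constructor
  · intro hsi
    -- Step 1: Y is prime with respect to quasi-compact opens.
    have prime : ∀ U V : Set X, IsOpen U → IsCompact U → IsOpen V → IsCompact V →
        (Y : Set X) ⊆ U ∪ V → (Y : Set X) ⊆ U ∨ (Y : Set X) ⊆ V := by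
      intro U V hUo hUc hVo hVc hYUV
      by_contra hcon
      push_neg at hcon
      obtain ⟨hnU, hnV⟩ := hcon
      have h1 : ((Y : Set X) ∩ U).Nonempty := by
        obtain ⟨z, hz, hznV⟩ := Set.not_subset.mp hnV
        exact ⟨z, hz, (hYUV hz).resolve_right hznV⟩
      have h2 : ((Y : Set X) ∩ V).Nonempty := by
        obtain ⟨z, hz, hznU⟩ := Set.not_subset.mp hnU
        exact ⟨z, hz, (hYUV hz).resolve_left hznU⟩
      set A : XCal X := ⟨(Y : Set X) ∩ U, h1, inter_invClosed Y.2.2 hUo hUc hInter⟩ with hA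
      set B : XCal X := ⟨(Y : Set X) ∩ V, h2, inter_invClosed Y.2.2 hVo hVc hInter⟩ with hB
      have hAB : (A : Set X) ∪ (B : Set X) = (Y : Set X) := by
        rw [hA, hB]
        simp only [← Set.inter_union_distrib_left]
        exact Set.inter_eq_self_of_subset_left hYUV
      have := hsi A B (XCal.spord_iff.mpr Set.inter_subset_left)
        (XCal.spord_iff.mpr Set.inter_subset_left)
        (fun z hAz hBz => XCal.spord_iff.mpr (by
          rw [← hAB]
          exact Set.union_subset (XCal.spord_iff.mp hAz) (XCal.spord_iff.mp hBz)))
      rcases this with h | h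
      · exact hnU (by rw [h]; exact Set.inter_subset_right)
      · exact hnV (by rw [h]; exact Set.inter_subset_right)
    -- finite unions
    have primeFin : ∀ T : Set (Set X), T.Finite → (∀ U ∈ T, IsOpen U ∧ IsCompact U) →
        (Y : Set X) ⊆ ⋃₀ T → ∃ U ∈ T, (Y : Set X) ⊆ U := by
      intro T hT
      refine Set.Finite.induction_on T hT ?_ ?_
      ·
        intro _ h
        rw [Set.sUnion_empty, Set.subset_empty_iff] at h
        exact absurd (h ▸ Y.2.1) (by simp)
      · intro a s ha hs ih hqc hsub
        rw [Set.sUnion_insert] at hsub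
        have hsq : ∀ U ∈ s, IsOpen U ∧ IsCompact U := fun U hU => hqc U (Set.mem_insert_of_mem _ hU)
        have haq := hqc a (Set.mem_insert _ _)
        rcases prime a (⋃₀ s) haq.1 haq.2 (isOpen_sUnion fun t ht => (hsq t ht).1)
          (hs.isCompact_sUnion fun t ht => (hsq t ht).2) hsub with h | h
        · exact ⟨a, Set.mem_insert _ _, h⟩
        · obtain ⟨U, hU, hYU⟩ := ih hsq h
          exact ⟨U, Set.mem_insert_of_mem _ hU, hYU⟩
    -- the closed set C = Wᶜ
    set F : Set (Set X) := {U : Set X | (IsOpen U ∧ IsCompact U) ∧ ¬ (Y : Set X) ⊆ U} with hF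
    set W : Set X := ⋃₀ F with hW
    have hWopen : IsOpen W := isOpen_sUnion fun t ht => ht.1.1
    have auxW : ∀ U : Set X, IsOpen U → IsCompact U → (Y : Set X) ⊆ U → ¬ U ⊆ W := by
      intro U hUo hUc hYU hUW
      rw [hW, Set.sUnion_eq_biUnion] at hUW
      obtain ⟨F', hF'sub, hF'fin, hcov⟩ :=
        hUc.elim_finite_subcover_image (fun V hV => hV.1.1) hUW
      have : (Y : Set X) ⊆ ⋃₀ F' := by
        rw [Set.sUnion_eq_biUnion]; exact hYU.trans hcov
      obtain ⟨U', hU', hYU'⟩ := primeFin F' hF'fin (fun V hV => (hF'sub hV).1) this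
      exact (hF'sub hU').2 hYU'
    have hCne : Wᶜ.Nonempty := by
      haveI := hCpt
      have := auxW Set.univ isOpen_univ isCompact_univ (Set.subset_univ _)
      obtain ⟨z, -, hz⟩ := Set.not_subset.mp this
      exact ⟨z, hz⟩
    have meetC : ∀ U : Set X, IsOpen U → IsCompact U → (Wᶜ ∩ U).Nonempty →
        (Y : Set X) ⊆ U := by
      intro U hUo hUc hne
      by_contra hn
      have hUW : U ⊆ W := Set.subset_sUnion_of_mem ⟨⟨hUo, hUc⟩, hn⟩
      obtain ⟨z, hz1, hz2⟩ := hne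
      exact hz1 (hUW hz2)
    have hirr : IsIrreducible Wᶜ := by
      refine ⟨hCne, fun u v hu hv hu' hv' => ?_⟩
      obtain ⟨z₁, hz₁C, hz₁u⟩ := hu'
      obtain ⟨z₂, hz₂C, hz₂v⟩ := hv'
      obtain ⟨U₁, hU₁, hzU₁, hU₁u⟩ := hBasis.exists_subset_of_mem_open hz₁u hu
      obtain ⟨U₂, hU₂, hzU₂, hU₂v⟩ := hBasis.exists_subset_of_mem_open hz₂v hv
      have hY1 : (Y : Set X) ⊆ U₁ := meetC U₁ hU₁.1 hU₁.2 ⟨z₁, hz₁C, hzU₁⟩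
      have hY2 : (Y : Set X) ⊆ U₂ := meetC U₂ hU₂.1 hU₂.2 ⟨z₂, hz₂C, hzU₂⟩
      have h12 : (Y : Set X) ⊆ U₁ ∩ U₂ := Set.subset_inter hY1 hY2
      have := auxW (U₁ ∩ U₂) (hU₁.1.inter hU₂.1)
        (hInter U₁ U₂ hU₁.1 hU₁.2 hU₂.1 hU₂.2) h12
      obtain ⟨w, hw1, hw2⟩ := Set.not_subset.mp this
      exact ⟨w, hw2, hU₁u hw1.1, hU₂v hw1.2⟩
    haveI := hSob
    obtain ⟨x, hx⟩ := QuasiSober.sober hirr hWopen.isClosed_compl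
    have hxC : x ∈ Wᶜ := hx ▸ subset_closure rfl
    have key : ∀ U : Set X, IsOpen U → IsCompact U → ((Y : Set X) ⊆ U ↔ x ∈ U) := by
      intro U hUo hUc
      constructor
      · intro hYU
        obtain ⟨w, hw1, hw2⟩ := Set.not_subset.mp (auxW U hUo hUc hYU)
        have hwC : w ∈ Wᶜ := hw2
        rw [← hx] at hwC
        obtain ⟨s, hs1, hs2⟩ := mem_closure_iff.mp hwC U hUo hw1
        rw [Set.mem_singleton_iff] at hs2
        rwa [← hs2]
      · intro hxU
        by_contra hn
        exact hxC (Set.subset_sUnion_of_mem (show U ∈ F from ⟨⟨hUo, hUc⟩, hn⟩) hxU)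
    refine ⟨x, ?_⟩
    rw [genOf_singleton_eq hBasis]
    apply subset_antisymm
    · exact subset_sInter fun U hU => (key U hU.1.1 hU.1.2).mpr hU.2
    · rw [XCal.coe_eq_sInter Y]
      exact Set.sInter_subset_sInter fun U hU => ⟨hU.1, (key U hU.1.1 hU.1.2).mp hU.2⟩
  · rintro ⟨x, hx⟩
    intro a b ha hb hsup
    rw [XCal.spord_iff] at ha hb
    set ab : XCal X := ⟨(a : Set X) ∪ (b : Set X), union_mem_XCal a b⟩ with hab
    have hYab : (Y : Set X) ⊆ (a : Set X) ∪ (b : Set X) :=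
      XCal.spord_iff.mp (hsup ab (XCal.spord_iff.mpr Set.subset_union_left)
        (XCal.spord_iff.mpr Set.subset_union_right))
    have hxY : x ∈ (Y : Set X) := hx ▸ self_mem_genOf x
    rcases hYab hxY with hxa | hxb
    · left
      apply Subtype.ext
      exact subset_antisymm (hx ▸ genOf_subset_invClosed a.2.2 hxa) ha
    · right
      apply Subtype.ext
      exact subset_antisymm (hx ▸ genOf_subset_invClosed b.2.2 hxb) hb

end Dev2

section Dev3

variable {X : Type*} [TopologicalSpace X]

lemma XCal.continuous_iff {A : Type*} [TopologicalSpace A] {f : A → XCal X} :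
    Continuous f ↔ ∀ Ω : Set X, IsOpen Ω → IsCompact Ω →
      IsOpen (f ⁻¹' {Y : XCal X | (Y : Set X) ⊆ Ω}) := by
  constructor
  · intro hf Ω h1 h2
    exact (XCal.isOpen_U h1 h2).preimage hf
  · intro h
    rw [continuous_def]
    intro S hS
    have hgen : TopologicalSpace.GenerateOpen (XSub X) S := XCal.isOpen_iff.mp hS
    clear hS
    induction hgen with
    | basic s hs =>
      obtain ⟨Ω, h1, h2, rfl⟩ := hs
      exact h Ω h1 h2
    | univ => exact isOpen_univ
    | inter s t _ _ ihs iht =>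
      rw [Set.preimage_inter]
      exact ihs.inter iht
    | sUnion K _ ih =>
      rw [Set.preimage_sUnion]
      exact isOpen_biUnion ih

lemma spord_homeo {T₁ T₂ : Type*} [TopologicalSpace T₁] [TopologicalSpace T₂]
    (φ : T₁ ≃ₜ T₂) {a b : T₁} : spord a b ↔ spord (φ a) (φ b) := by
  rw [spord_iff_specializes, spord_iff_specializes]
  exact (φ.isInducing.specializes_iff).symm

lemma supIrr_homeo {T₁ T₂ : Type*} [TopologicalSpace T₁] [TopologicalSpace T₂]
    (φ : T₁ ≃ₜ T₂) {y : T₁} (h : SupIrr y) : SupIrr (φ y) := by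
  intro a b ha hb hsup
  have ha' : spord (φ.symm a) y := by
    rw [spord_homeo φ]; simpa using ha
  have hb' : spord (φ.symm b) y := by
    rw [spord_homeo φ]; simpa using hb
  have hsup' : ∀ z : T₁, spord (φ.symm a) z → spord (φ.symm b) z → spord y z := by
    intro z h1 h2
    rw [spord_homeo φ]
    apply hsup (φ z)
    · rw [spord_homeo φ] at h1; simpa using h1
    · rw [spord_homeo φ] at h2; simpa using h2
  rcases h (φ.symm a) (φ.symm b) ha' hb' hsup' with h' | h'
  · left; rw [h']; simp
  · right; rw [h']; simp

lemma supIrr_homeo_iff {T₁ T₂ : Type*} [TopologicalSpace T₁] [TopologicalSpace T₂]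
    (φ : T₁ ≃ₜ T₂) {y : T₁} : SupIrr y ↔ SupIrr (φ y) := by
  refine ⟨supIrr_homeo φ, fun h => ?_⟩
  have := supIrr_homeo φ.symm h
  simpa using this

/-- `X` is homeomorphic to the subspace of sup-irreducible elements of `𝒳(X)`. -/
lemma genHomeo (hX : IsSpectralSpace X) :
    Nonempty (X ≃ₜ {Y : XCal X // SupIrr Y}) := by
  obtain ⟨hT0, hCpt, hSob, hBasis, hInter⟩ := hX
  haveI := hT0
  set g0 : X → XCal X := fun x => ⟨genOf {x}, genOf_invClosed hBasis x⟩ with hg0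
  have hg0mem : ∀ x : X, SupIrr (g0 x) := fun x =>
    (supIrr_iff_genOf ⟨hT0, hCpt, hSob, hBasis, hInter⟩ (g0 x)).mpr ⟨x, rfl⟩
  set g : X → {Y : XCal X // SupIrr Y} := fun x => ⟨g0 x, hg0mem x⟩ with hg
  have hginj : Function.Injective g := by
    intro x y hxy
    have h : genOf ({x} : Set X) = genOf {y} := congrArg (fun z => ((z : XCal X) : Set X)) (congrArg Subtype.val hxy)
    have hx' : x ∈ genOf {y} := by
      have := self_mem_genOf x; rwa [h] at this
    have hy' : y ∈ genOf {x} := by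
      have := self_mem_genOf y; rwa [← h] at this
    have h1 : x ⤳ y := specializes_iff_mem_closure.mpr (mem_genOf_singleton.mp hx')
    have h2 : y ⤳ x := specializes_iff_mem_closure.mpr (mem_genOf_singleton.mp hy')
    exact (h1.antisymm h2).eq
  have hgsurj : Function.Surjective g := by
    rintro ⟨Y, hY⟩
    obtain ⟨x, hx⟩ := (supIrr_iff_genOf ⟨hT0, hCpt, hSob, hBasis, hInter⟩ Y).mp hY
    exact ⟨x, Subtype.ext (Subtype.ext hx.symm)⟩
  have hsubset_iff : ∀ (x : X) (Ω : Set X), IsOpen Ω → (genOf {x} ⊆ Ω ↔ x ∈ Ω) :=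
    fun x Ω hΩ => ⟨fun h => h (self_mem_genOf x), fun h => genOf_subset_open hΩ h⟩
  have hg0cont : Continuous g0 := by
    rw [XCal.continuous_iff]
    intro Ω h1 h2
    have : g0 ⁻¹' {Y : XCal X | (Y : Set X) ⊆ Ω} = Ω := by
      ext x
      simpa using hsubset_iff x Ω h1
    rw [this]
    exact h1
  have hgcont : Continuous g := hg0cont.subtype_mk hg0mem
  have hgopen : IsOpenMap g := by
    intro V hV
    obtain ⟨S, hS, rfl⟩ := hBasis.open_eq_sUnion hV
    rw [Set.image_sUnion]
    apply isOpen_sUnion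
    rintro t ⟨Ω, hΩ, rfl⟩
    have himg : g '' Ω = Subtype.val ⁻¹' {Y : XCal X | (Y : Set X) ⊆ Ω} := by
      ext y
      constructor
      · rintro ⟨x, hx, rfl⟩
        exact (hsubset_iff x Ω (hS hΩ).1).mpr hx
      · intro hy
        obtain ⟨x, rfl⟩ := hgsurj y
        exact ⟨x, (hsubset_iff x Ω (hS hΩ).1).mp hy, rfl⟩
    rw [himg]
    exact (XCal.isOpen_U (hS hΩ).1 (hS hΩ).2).preimage continuous_subtype_val
  exact ⟨Equiv.toHomeomorphOfContinuousOpen (Equiv.ofBijective g ⟨hginj, hgsurj⟩)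
    hgcont hgopen⟩

/-- Image of a nonempty inverse-closed set under a homeomorphism. -/
lemma himg_aux {Z W : Type*} [TopologicalSpace Z] [TopologicalSpace W]
    (f : Z ≃ₜ W) (Y : Set Z) (hne : Y.Nonempty) (hic : InvClosed Y) :
    ((f '' Y : Set W).Nonempty ∧ InvClosed (f '' Y)) := by
  refine ⟨hne.image f, ?_⟩
  obtain ⟨𝒪, h𝒪, rfl⟩ := hic
  refine ⟨(fun U => f '' U) '' 𝒪, ?_, ?_⟩
  · rintro V ⟨U, hU, rfl⟩
    exact ⟨f.isOpen_image.mpr (h𝒪 U hU).1, (h𝒪 U hU).2.image f.continuous⟩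
  · rw [Set.sInter_image]
    rw [show ⇑f '' ⋂₀ 𝒪 = ⇑f.symm ⁻¹' ⋂₀ 𝒪 from f.toEquiv.image_eq_preimage_symm _]
    rw [Set.preimage_sInter]
    refine Set.iInter₂_congr fun U hU => ?_
    exact (f.toEquiv.image_eq_preimage_symm U).symm

lemma hcont_aux {Z W : Type*} [TopologicalSpace Z] [TopologicalSpace W] (f : Z ≃ₜ W)
    (F : XCal Z → XCal W) (hF : ∀ Y, (F Y : Set W) = f '' (Y : Set Z)) : Continuous F := by
  rw [XCal.continuous_iff]
  intro Ω h1 h2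
  have heq : F ⁻¹' {Y : XCal W | (Y : Set W) ⊆ Ω} =
      {Y : XCal Z | (Y : Set Z) ⊆ f ⁻¹' Ω} := by
    ext Y
    simp only [Set.mem_preimage, Set.mem_setOf_eq, hF, Set.image_subset_iff]
  rw [heq]
  exact XCal.isOpen_U (h1.preimage f.continuous) (f.isCompact_preimage.mpr h2)

/-- A homeomorphism of spaces induces a homeomorphism of the `𝒳`-spaces. -/
lemma xcalHomeo {X₁ X₂ : Type*} [TopologicalSpace X₁] [TopologicalSpace X₂]
    (e : X₁ ≃ₜ X₂) : Nonempty (XCal X₁ ≃ₜ XCal X₂) := by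
  let Φ : XCal X₁ ≃ XCal X₂ :=
    { toFun := fun Y => ⟨e '' Y.1, himg_aux e Y.1 Y.2.1 Y.2.2⟩
      invFun := fun Y => ⟨e.symm '' Y.1, himg_aux e.symm Y.1 Y.2.1 Y.2.2⟩
      left_inv := fun Y => Subtype.ext (e.toEquiv.symm_image_image Y.1)
      right_inv := fun Y => Subtype.ext (e.toEquiv.image_symm_image Y.1) }
  exact ⟨{ Φ with
    continuous_toFun := hcont_aux e _ (fun Y => rfl)
    continuous_invFun := hcont_aux e.symm _ (fun Y => rfl) }⟩

end Dev3

/-- Two spectral spaces `X₁` and `X₂` are homeomorphic iff `𝒳(X₁)` and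
`𝒳(X₂)` are homeomorphic. -/
theorem stmt16 {X₁ X₂ : Type*} [TopologicalSpace X₁] [TopologicalSpace X₂]
    (hX₁ : IsSpectralSpace X₁) (hX₂ : IsSpectralSpace X₂) :
    Nonempty (X₁ ≃ₜ X₂) ↔ Nonempty (XCal X₁ ≃ₜ XCal X₂) := by
  constructor
  · rintro ⟨e⟩
    exact xcalHomeo e
  · rintro ⟨φ⟩
    obtain ⟨g₁⟩ := genHomeo hX₁
    obtain ⟨g₂⟩ := genHomeo hX₂
    exact ⟨g₁.trans ((φ.subtype (fun Y => supIrr_homeo_iff φ)).trans g₂.symm)⟩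
end
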